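/- Let k be a field of characteristic ≠ 2, V a k-vector space of finite dimension n, and Q : V → k a quadratic form. If (b i)_{i ∈ Fin n} and (b' i)_{i ∈ Fin n} are two orthogonal bases of V for Q, with associated elements d_b := ι(b 0)⋯ι(b (n−1)) and d_{b'} := ι(b' 0)⋯ι(b' (n−1)) in CliffordAlgebra Q, then there exists a nonzero scalar c ∈ k such that d_{b'} = c · d_b. -/

import Mathlib

open CliffordAlgebra

private lemma contract_ofFn_prod_eq_zero {k V : Type*} [Field k] [AddCommGroup V] [Module k V]
    (Q' : QuadraticForm k V) (d : Module.Dual k V) :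
    ∀ (m : ℕ) (g : Fin m → V), (∀ j, d (g j) = 0) →
      contractLeft (Q := Q') d (List.ofFn fun j => ι Q' (g j)).prod = 0
  | 0, g, _ => by
      simp
  | (m + 1), g, hg => by
      rw [List.ofFn_succ, List.prod_cons, contractLeft_ι_mul, hg 0, zero_smul,
        contract_ofFn_prod_eq_zero Q' d m (fun j => g j.succ) (fun j => hg j.succ),
        mul_zero, sub_zero]

private lemma changeForm_ofFn_prod {k V : Type*} [Field k] [AddCommGroup V] [Module k V]
    {Q Q' : QuadraticForm k V} {B : LinearMap.BilinForm k V}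
    (h : B.toQuadraticMap = Q' - Q) :
    ∀ (m : ℕ) (f : Fin m → V), (∀ i j, i ≠ j → B (f i) (f j) = 0) →
      changeForm h (List.ofFn fun i => ι Q (f i)).prod =
        (List.ofFn fun i => ι Q' (f i)).prod
  | 0, f, _ => by
      simp
  | (m + 1), f, hf => by
      have ih := changeForm_ofFn_prod h m (fun i => f i.succ)
        (fun i j hij => hf i.succ j.succ (by simpa using hij))
      rw [List.ofFn_succ, List.prod_cons, changeForm_ι_mul, ih,
        contract_ofFn_prod_eq_zero Q' (B (f 0)) m (fun j => f j.succ)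
          (fun j => hf 0 j.succ (Fin.succ_ne_zero j).symm),
        sub_zero]
      conv_rhs => rw [List.ofFn_succ, List.prod_cons]

/-- Over a field of characteristic different from 2, the elements `d` associated to two
orthogonal bases of a quadratic form agree up to a nonzero scalar. -/
theorem clifford_d_unique_up_to_scalar
    (k : Type*) [Field k] (hchar : (ringChar k) ≠ 2)
    (V : Type*) [AddCommGroup V] [Module k V]
    (n : ℕ) (Q : QuadraticForm k V)
    (b b' : Module.Basis (Fin n) k V)
    (horth : ∀ i j : Fin n, i ≠ j → QuadraticMap.polar Q (b i) (b j) = 0)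
    (horth' : ∀ i j : Fin n, i ≠ j → QuadraticMap.polar Q (b' i) (b' j) = 0) :
    ∃ c : k, c ≠ 0 ∧
      (List.ofFn fun i : Fin n => ι Q (b' i)).prod =
        c • (List.ofFn fun i : Fin n => ι Q (b i)).prod := by
  haveI : Invertible (2 : k) := invertibleOfNonzero (Ring.two_ne_zero hchar)
  -- the bilinear form used by `equivExterior`
  set B : LinearMap.BilinForm k V := QuadraticMap.associated (R := k) (-Q) with hBdef
  have hB : ∀ v w : V, QuadraticMap.polar Q v w = 0 → B v w = 0 := by
    intro v w hvw
    have h1 : (-Q) (v + w) - (-Q) v - (-Q) w = -(QuadraticMap.polar Q v w) := by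
      simp [QuadraticMap.polar]
      ring
    rw [hBdef, QuadraticMap.associated_apply, h1, hvw, neg_zero, smul_zero]
  -- apply `equivExterior` to both products
  have hb : equivExterior Q (List.ofFn fun i => ι Q (b i)).prod =
      (List.ofFn fun i => ι (0 : QuadraticForm k V) (b i)).prod := by
    rw [equivExterior, changeFormEquiv_apply]
    exact changeForm_ofFn_prod _ n b (fun i j hij => hB _ _ (horth i j hij))
  have hb' : equivExterior Q (List.ofFn fun i => ι Q (b' i)).prod =
      (List.ofFn fun i => ι (0 : QuadraticForm k V) (b' i)).prod := by
    rw [equivExterior, changeFormEquiv_apply]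
    exact changeForm_ofFn_prod _ n b' (fun i j hij => hB _ _ (horth' i j hij))
  -- in the exterior algebra, the two products differ by the determinant
  have hdet : (ExteriorAlgebra.ιMulti k n : V [⋀^Fin n]→ₗ[k] ExteriorAlgebra k V) =
      (LinearMap.toSpanSingleton k _
        (ExteriorAlgebra.ιMulti k n ⇑b)).compAlternatingMap b.det := by
    refine Module.Basis.ext_alternating b fun i hi => ?_
    let σ : Equiv.Perm (Fin n) := Equiv.ofBijective i (Finite.injective_iff_bijective.1 hi)
    have h2 : (fun j => b (i j)) = ⇑b ∘ ⇑σ := rfl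
    rw [h2, AlternatingMap.map_perm, LinearMap.compAlternatingMap_apply,
      AlternatingMap.map_perm, Module.Basis.det_self, LinearMap.toSpanSingleton_apply]
    simp [smul_comm]
  have hkey : (List.ofFn fun i => ι (0 : QuadraticForm k V) (b' i)).prod =
      (b.det ⇑b') • (List.ofFn fun i => ι (0 : QuadraticForm k V) (b i)).prod := by
    have h1 := congrFun (congrArg DFunLike.coe hdet) ⇑b'
    simpa [ExteriorAlgebra.ιMulti_apply, LinearMap.toSpanSingleton_apply] using h1
  refine ⟨b.det ⇑b', (b.det.map_basis_ne_zero_iff b').mpr ?_, ?_⟩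
  · intro h0
    have := b.det_self
    rw [h0] at this
    simp at this
  · apply (equivExterior Q).injective
    rw [map_smul, hb, hb', hkey]
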